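/- Let A be an m×n integer matrix and B the 2m×2n matrix obtained by replacing each entry a of A by the block [[-a, a],[a, -a]]. Then for every k, the k-th determinantal ideal (gcd of k×k minors) of B equals that of A; in particular B and A have the same invariant factors up to trailing zeros, and rank(B) = rank(A). -/
import Mathlib
set_option maxHeartbeats 1000000

open Matrix Kronecker

private def vv : Fin 2 → ℤ := fun p => if p = 0 then -1 else 1
private def ww : Fin 2 → ℤ := fun p => if p = 0 then 1 else -1

private lemma B_apply {m n : ℕ} (A : Matrix (Fin m) (Fin n) ℤ)
    (p : Fin m × Fin 2) (q : Fin n × Fin 2) :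
    (A ⊗ₖ !![(-1 : ℤ), 1; 1, -1]) p q = vv p.2 * A p.1 q.1 * ww q.2 := by
  rcases p with ⟨i, p⟩; rcases q with ⟨j, q⟩
  fin_cases p <;> fin_cases q <;>
    simp [Matrix.kroneckerMap_apply, vv, ww]

private lemma key {m n k : ℕ} (A : Matrix (Fin m) (Fin n) ℤ)
    (f : Fin k → Fin m × Fin 2) (g : Fin k → Fin n × Fin 2) :
    ((A ⊗ₖ !![(-1 : ℤ), 1; 1, -1]).submatrix f g).det =
      (∏ a, vv (f a).2) * (∏ b, ww (g b).2) *
        (A.submatrix (fun a => (f a).1) (fun b => (g b).1)).det := by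
  have h : (A ⊗ₖ !![(-1 : ℤ), 1; 1, -1]).submatrix f g =
      Matrix.diagonal (fun a => vv (f a).2) *
        (A.submatrix (fun a => (f a).1) (fun b => (g b).1)) *
        Matrix.diagonal (fun b => ww (g b).2) := by
    ext a b
    rcases hf : f a with ⟨i1, p⟩
    rcases hg : g b with ⟨j1, q⟩
    simp [Matrix.mul_apply, Matrix.diagonal_apply, hf, hg, mul_ite, ite_mul,
      Finset.sum_ite_eq, Finset.sum_ite_eq']
    fin_cases p <;> fin_cases q <;> simp [vv, ww]
  rw [h, Matrix.det_mul, Matrix.det_mul, Matrix.det_diagonal, Matrix.det_diagonal]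
  ring

/-- if `B = A ⊗ₖ [[-1,1],[1,-1]]` (each entry `a` of `A` replaced by the block
`[[-a,a],[a,-a]]`), then for every `k` the ideal of ℤ generated by the `k×k` minors of `B`
equals the one generated by the `k×k` minors of `A`; in particular `rank B = rank A`. -/
theorem stmt_1 (m n : ℕ) (A : Matrix (Fin m) (Fin n) ℤ) :
    (∀ k : ℕ,
      Ideal.span {d : ℤ | ∃ (f : Fin k → Fin m × Fin 2) (g : Fin k → Fin n × Fin 2),
          d = ((A ⊗ₖ !![(-1 : ℤ), 1; 1, -1]).submatrix f g).det} =
      Ideal.span {d : ℤ | ∃ (f : Fin k → Fin m) (g : Fin k → Fin n),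
          d = (A.submatrix f g).det}) ∧
    (A ⊗ₖ !![(-1 : ℤ), 1; 1, -1]).rank = A.rank := by
  constructor
  · intro k
    apply le_antisymm
    · rw [Ideal.span_le]
      rintro d ⟨f, g, rfl⟩
      rw [key]
      exact Ideal.mul_mem_left _ _
        (Ideal.subset_span ⟨fun a => (f a).1, fun b => (g b).1, rfl⟩)
    · apply Ideal.span_mono
      rintro d ⟨f, g, rfl⟩
      refine ⟨fun a => (f a, 1), fun b => (g b, 0), ?_⟩
      rw [key]
      simp [vv, ww]
  · apply le_antisymm
    · have hE : A ⊗ₖ !![(-1 : ℤ), 1; 1, -1] =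
          (Matrix.of fun (p : Fin m × Fin 2) (i : Fin m) =>
            if p.1 = i then vv p.2 else 0) * A *
          (Matrix.of fun (j : Fin n) (q : Fin n × Fin 2) =>
            if q.1 = j then ww q.2 else 0) := by
        ext ⟨i, p⟩ ⟨j, q⟩
        simp [Matrix.mul_apply, mul_ite, ite_mul, mul_zero, zero_mul,
          Finset.sum_ite_eq, Finset.sum_ite_eq']
        fin_cases p <;> fin_cases q <;> simp [vv, ww]
      rw [hE]
      refine le_trans (Matrix.rank_mul_le_left _ _) ?_
      exact Matrix.rank_mul_le_right _ _
    · have hA : A = (Matrix.of fun (i : Fin m) (p : Fin m × Fin 2) =>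
            if p = (i, 1) then (1 : ℤ) else 0) * (A ⊗ₖ !![(-1 : ℤ), 1; 1, -1]) *
          (Matrix.of fun (q : Fin n × Fin 2) (j : Fin n) =>
            if q = (j, 0) then (1 : ℤ) else 0) := by
        ext i j
        simp [Matrix.mul_apply, mul_ite, ite_mul, mul_zero, zero_mul,
          one_mul, mul_one, Finset.sum_ite_eq, Finset.sum_ite_eq']
      conv_lhs => rw [hA]
      refine le_trans (Matrix.rank_mul_le_left _ _) ?_
      exact Matrix.rank_mul_le_right _ _
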